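/- Let c ∈ ℝ with c + 1 > 0. There exist constants C₁, C₂ > 0 such that for all z₀ = (x₀, y₀) with y₀ ≥ 0 and all r > 0, C₁ r^{N+1+c} (y₀/r)^c (min(y₀/r, 1))^{−c} ≤ V(z₀, r) ≤ C₂ r^{N+1+c} (y₀/r)^c (min(y₀/r, 1))^{−c}. -/

import Mathlib

open MeasureTheory Set

private lemma rpow_integrableOn {c : ℝ} (hc : -1 < c) (a b : ℝ) :
    IntegrableOn (fun y : ℝ => y ^ c) (Ioo a b) volume :=
  (intervalIntegral.intervalIntegrable_rpow' (a := a) (b := b) hc).1.mono_set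
    Ioo_subset_Ioc_self

private lemma key (c : ℝ) (hc : 0 < c + 1) :
    ∃ K₁ > (0:ℝ), ∃ K₂ > (0:ℝ), ∀ y₀ r : ℝ, 0 ≤ y₀ → 0 < r →
      K₁ * (r * (max y₀ r) ^ c) ≤ (∫ y in Ioo (max (y₀ - r) 0) (y₀ + r), y ^ c) ∧
      (∫ y in Ioo (max (y₀ - r) 0) (y₀ + r), y ^ c) ≤ K₂ * (r * (max y₀ r) ^ c) := by
  have hc' : (-1:ℝ) < c := by linarith
  have hApos : (0:ℝ) < (4:ℝ)^(c+1)/((c+1) * 3^c) := by positivity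
  have hBpos : (0:ℝ) < 2 * (2/3:ℝ)^c := by positivity
  have hCpos : (0:ℝ) < 2 * (2:ℝ)^c := by positivity
  refine ⟨min ((2:ℝ)^c) ((1/2:ℝ)^c) / 2, by positivity,
    max ((4:ℝ)^(c+1)/((c+1) * 3^c)) (2 * (2/3:ℝ)^c) + 2 * (2:ℝ)^c, by positivity,
    fun y₀ r hy hr => ?_⟩
  have hm0 : 0 < max y₀ r := lt_max_of_lt_right hr
  have ha0 : 0 ≤ max (y₀ - r) 0 := le_max_right _ _
  have hab : max (y₀ - r) 0 ≤ y₀ + r := max_le (by linarith) (by linarith)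
  have hbm : y₀ + r ≤ 2 * max y₀ r := by
    have h1 := le_max_left y₀ r; have h2 := le_max_right y₀ r; linarith
  have hmb : max y₀ r ≤ y₀ + r := max_le (by linarith) (by linarith)
  have hX : (0:ℝ) ≤ r * (max y₀ r) ^ c := by positivity
  have hKtot1 : max ((4:ℝ)^(c+1)/((c+1) * 3^c)) (2 * (2/3:ℝ)^c)
      ≤ max ((4:ℝ)^(c+1)/((c+1) * 3^c)) (2 * (2/3:ℝ)^c) + 2 * (2:ℝ)^c := by linarith
  have hKtot2 : 2 * (2:ℝ)^c
      ≤ max ((4:ℝ)^(c+1)/((c+1) * 3^c)) (2 * (2/3:ℝ)^c) + 2 * (2:ℝ)^c := by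
    have := lt_max_iff.2 (Or.inl hApos : (0:ℝ) < (4:ℝ)^(c+1)/((c+1) * 3^c) ∨ (0:ℝ) < 2 * (2/3:ℝ)^c); linarith
  constructor
  · -- LOWER BOUND
    have hsub : Ioo (y₀ + r/2) (y₀ + r) ⊆ Ioo (max (y₀ - r) 0) (y₀ + r) :=
      Ioo_subset_Ioo (max_le (by linarith) (by linarith)) le_rfl
    have hmono : (∫ y in Ioo (y₀ + r/2) (y₀ + r), y ^ c)
        ≤ ∫ y in Ioo (max (y₀ - r) 0) (y₀ + r), y ^ c := by
      apply setIntegral_mono_set (rpow_integrableOn hc' _ _)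
      · filter_upwards [ae_restrict_mem measurableSet_Ioo] with y hy'
        exact Real.rpow_nonneg (le_trans ha0 hy'.1.le) c
      · exact HasSubset.Subset.eventuallyLE hsub
    have hconst : min ((2:ℝ)^c) ((1/2:ℝ)^c) * (max y₀ r) ^ c * (r/2)
        ≤ ∫ y in Ioo (y₀ + r/2) (y₀ + r), y ^ c := by
      have hmain := setIntegral_mono_on
        (f := fun _ : ℝ => min ((2:ℝ)^c) ((1/2:ℝ)^c) * (max y₀ r) ^ c)
        (g := fun y : ℝ => y ^ c) (s := Ioo (y₀ + r/2) (y₀ + r)) (μ := volume)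
        (integrableOn_const (by simp [Real.volume_Ioo]))
        (rpow_integrableOn hc' _ _) measurableSet_Ioo ?_
      · rw [setIntegral_const, measureReal_def, Real.volume_Ioo, smul_eq_mul,
          ENNReal.toReal_ofReal (by linarith)] at hmain
        have : y₀ + r - (y₀ + r/2) = r/2 := by ring
        rw [this] at hmain
        linarith [hmain, mul_comm (r/2) (min ((2:ℝ)^c) ((1/2:ℝ)^c) * (max y₀ r) ^ c)]
      · intro y hy'
        show min ((2:ℝ)^c) ((1/2:ℝ)^c) * (max y₀ r) ^ c ≤ y ^ c
        have hy1 : max y₀ r / 2 ≤ y := by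
          have := hy'.1; linarith
        have hy2 : y ≤ 2 * max y₀ r := le_trans hy'.2.le hbm
        have hy0 : 0 < y := lt_of_lt_of_le (by positivity) hy1
        rcases le_or_gt 0 c with h0 | h0
        · calc min ((2:ℝ)^c) ((1/2:ℝ)^c) * (max y₀ r) ^ c
              ≤ (1/2:ℝ)^c * (max y₀ r) ^ c :=
                mul_le_mul_of_nonneg_right (min_le_right _ _) (by positivity)
            _ = ((1/2) * max y₀ r) ^ c := (Real.mul_rpow (by norm_num) hm0.le).symm
            _ ≤ y ^ c := by
                apply Real.rpow_le_rpow (by positivity) _ h0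
                linarith
        · calc min ((2:ℝ)^c) ((1/2:ℝ)^c) * (max y₀ r) ^ c
              ≤ (2:ℝ)^c * (max y₀ r) ^ c :=
                mul_le_mul_of_nonneg_right (min_le_left _ _) (by positivity)
            _ = (2 * max y₀ r) ^ c := (Real.mul_rpow (by norm_num) hm0.le).symm
            _ ≤ y ^ c := Real.rpow_le_rpow_of_nonpos hy0 hy2 h0.le
    calc min ((2:ℝ)^c) ((1/2:ℝ)^c) / 2 * (r * (max y₀ r) ^ c)
        = min ((2:ℝ)^c) ((1/2:ℝ)^c) * (max y₀ r) ^ c * (r/2) := by ring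
      _ ≤ ∫ y in Ioo (y₀ + r/2) (y₀ + r), y ^ c := hconst
      _ ≤ _ := hmono
  · -- UPPER BOUND
    have hfin : ∀ K : ℝ,
        K ≤ max ((4:ℝ)^(c+1)/((c+1) * 3^c)) (2 * (2/3:ℝ)^c) + 2 * (2:ℝ)^c →
        (∫ y in Ioo (max (y₀ - r) 0) (y₀ + r), y ^ c) ≤ K * (r * (max y₀ r) ^ c) →
        (∫ y in Ioo (max (y₀ - r) 0) (y₀ + r), y ^ c)
          ≤ (max ((4:ℝ)^(c+1)/((c+1) * 3^c)) (2 * (2/3:ℝ)^c) + 2 * (2:ℝ)^c)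
            * (r * (max y₀ r) ^ c) :=
      fun K hK h => h.trans (mul_le_mul_of_nonneg_right hK hX)
    rcases le_or_gt 0 c with h0 | h0
    · -- c ≥ 0 : constant bound
      apply hfin (2 * (2:ℝ)^c) hKtot2
      have hstep := setIntegral_mono_on
        (f := fun y : ℝ => y ^ c)
        (g := fun _ : ℝ => (2:ℝ)^c * (max y₀ r) ^ c)
        (s := Ioo (max (y₀ - r) 0) (y₀ + r)) (μ := volume)
        (rpow_integrableOn hc' _ _)
        (integrableOn_const (by simp [Real.volume_Ioo]))
        measurableSet_Ioo ?_
      · rw [setIntegral_const, measureReal_def, Real.volume_Ioo, smul_eq_mul,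
          ENNReal.toReal_ofReal (by linarith)] at hstep
        have hba : y₀ + r - max (y₀ - r) 0 ≤ 2 * r := by
          have := le_max_left (y₀ - r) 0; linarith
        calc (∫ y in Ioo (max (y₀ - r) 0) (y₀ + r), y ^ c)
            ≤ (y₀ + r - max (y₀ - r) 0) * ((2:ℝ)^c * (max y₀ r) ^ c) := hstep
          _ ≤ (2*r) * ((2:ℝ)^c * (max y₀ r) ^ c) :=
              mul_le_mul_of_nonneg_right hba (by positivity)
          _ = 2 * (2:ℝ)^c * (r * (max y₀ r) ^ c) := by ring
      · intro y hy'
        show y ^ c ≤ (2:ℝ)^c * (max y₀ r) ^ c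
        calc y ^ c ≤ (2 * max y₀ r) ^ c :=
              Real.rpow_le_rpow (le_trans ha0 hy'.1.le) (le_trans hy'.2.le hbm) h0
          _ = (2:ℝ)^c * (max y₀ r) ^ c := Real.mul_rpow (by norm_num) hm0.le
    · rcases le_or_gt y₀ (3*r) with h3 | h3
      · -- c < 0, y₀ ≤ 3r : use antiderivative on (0, y₀+r)
        apply hfin _ hKtot1
        have hmono : (∫ y in Ioo (max (y₀ - r) 0) (y₀ + r), y ^ c)
            ≤ ∫ y in Ioo 0 (y₀ + r), y ^ c := by
          apply setIntegral_mono_set (rpow_integrableOn hc' 0 _)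
          · filter_upwards [ae_restrict_mem measurableSet_Ioo] with y hy'
            exact Real.rpow_nonneg hy'.1.le c
          · exact HasSubset.Subset.eventuallyLE (Ioo_subset_Ioo ha0 le_rfl)
        have hval : (∫ y in Ioo 0 (y₀ + r), y ^ c) = (y₀ + r) ^ (c+1) / (c+1) := by
          rw [← integral_Ioc_eq_integral_Ioo,
            ← intervalIntegral.integral_of_le (by linarith : (0:ℝ) ≤ y₀ + r),
            integral_rpow (Or.inl hc'), Real.zero_rpow (by linarith : c + 1 ≠ 0)]
          ring
        have hb4 : (y₀ + r) ^ (c+1) ≤ (4:ℝ)^(c+1) * r ^ (c+1) := by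
          calc (y₀ + r) ^ (c+1) ≤ (4*r) ^ (c+1) :=
                Real.rpow_le_rpow (by linarith) (by linarith) hc.le
            _ = (4:ℝ)^(c+1) * r ^ (c+1) := Real.mul_rpow (by norm_num) hr.le
        have hm3 : (3:ℝ)^c * r ^ c ≤ (max y₀ r) ^ c := by
          calc (3:ℝ)^c * r ^ c = (3*r) ^ c := (Real.mul_rpow (by norm_num) hr.le).symm
            _ ≤ (max y₀ r) ^ c := Real.rpow_le_rpow_of_nonpos hm0
                (max_le (by linarith) (by linarith)) h0.le
        have hrc1 : r ^ (c+1) = r ^ c * r := by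
          rw [Real.rpow_add hr, Real.rpow_one]
        calc (∫ y in Ioo (max (y₀ - r) 0) (y₀ + r), y ^ c)
            ≤ (y₀ + r) ^ (c+1) / (c+1) := by rw [← hval]; exact hmono
          _ ≤ (4:ℝ)^(c+1) * r ^ (c+1) / (c+1) := by gcongr
          _ = ((4:ℝ)^(c+1)/((c+1) * 3^c)) * ((3:ℝ)^c * r ^ c * r) := by
              rw [hrc1]; field_simp
          _ ≤ ((4:ℝ)^(c+1)/((c+1) * 3^c)) * (r * (max y₀ r) ^ c) := by
              apply mul_le_mul_of_nonneg_left _ hApos.le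
              calc (3:ℝ)^c * r ^ c * r ≤ (max y₀ r) ^ c * r :=
                    mul_le_mul_of_nonneg_right hm3 hr.le
                _ = r * (max y₀ r) ^ c := by ring
          _ ≤ _ := mul_le_mul_of_nonneg_right (le_max_left _ _) hX
      · -- c < 0, y₀ > 3r
        apply hfin _ hKtot1
        have haeq : max (y₀ - r) 0 = y₀ - r := max_eq_left (by linarith)
        have hmeq : max y₀ r = y₀ := max_eq_left (by linarith)
        have hstep := setIntegral_mono_on
          (f := fun y : ℝ => y ^ c)
          (g := fun _ : ℝ => (2/3:ℝ)^c * (max y₀ r) ^ c)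
          (s := Ioo (max (y₀ - r) 0) (y₀ + r)) (μ := volume)
          (rpow_integrableOn hc' _ _)
          (integrableOn_const (by simp [Real.volume_Ioo]))
          measurableSet_Ioo ?_
        · rw [setIntegral_const, measureReal_def, Real.volume_Ioo, smul_eq_mul,
            ENNReal.toReal_ofReal (by linarith)] at hstep
          calc (∫ y in Ioo (max (y₀ - r) 0) (y₀ + r), y ^ c)
              ≤ (y₀ + r - max (y₀ - r) 0) * ((2/3:ℝ)^c * (max y₀ r) ^ c) := hstep
            _ = 2 * (2/3:ℝ)^c * (r * (max y₀ r) ^ c) := by rw [haeq]; ring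
            _ ≤ _ := mul_le_mul_of_nonneg_right (le_max_right _ _) hX
        · intro y hy'
          show y ^ c ≤ (2/3:ℝ)^c * (max y₀ r) ^ c
          have hy23 : (2/3:ℝ) * max y₀ r ≤ y := by
            rw [hmeq]; rw [haeq] at hy'; have := hy'.1; linarith
          calc y ^ c ≤ ((2/3:ℝ) * max y₀ r) ^ c :=
                Real.rpow_le_rpow_of_nonpos (by positivity) hy23 h0.le
            _ = (2/3:ℝ)^c * (max y₀ r) ^ c := Real.mul_rpow (by norm_num) hm0.le

/-- `V (z₀, r) = ω_N r^N ∫_{max(y₀-r,0)}^{y₀+r} y^c dy`, the μ-measure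
(`dμ = y^c dx dy`) of the cylindrical ball `Q(z₀,r)`. -/
noncomputable def V (N : ℕ) (c y₀ r : ℝ) : ℝ :=
  (volume (Metric.ball (0 : EuclideanSpace ℝ (Fin N)) 1)).toReal * r ^ N *
    ∫ y in Ioo (max (y₀ - r) 0) (y₀ + r), y ^ c

/-- Lemma 2.5, two-sided bound: `V(z₀,r) ≃ r^{N+1+c} (y₀/r)^c (min(y₀/r,1))^{-c}`.
The weight `(y₀/r)^c (min(y₀/r,1))^{-c}` equals `1` for `y₀ ≤ r` and `(y₀/r)^c`
for `y₀ > r`, i.e. it equals `(max (y₀/r) 1)^c`. -/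
theorem stmt_2 (N : ℕ) (c : ℝ) (hc : c + 1 > 0) :
    ∃ C₁ > (0:ℝ), ∃ C₂ > (0:ℝ), ∀ y₀ r : ℝ, 0 ≤ y₀ → 0 < r →
      C₁ * (r ^ ((N : ℝ) + 1 + c) * (max (y₀ / r) 1) ^ c) ≤ V N c y₀ r ∧
      V N c y₀ r ≤ C₂ * (r ^ ((N : ℝ) + 1 + c) * (max (y₀ / r) 1) ^ c) := by
  obtain ⟨K₁, hK₁, K₂, hK₂, hK⟩ := key c hc
  have hωpos : 0 < (volume (Metric.ball (0 : EuclideanSpace ℝ (Fin N)) 1)).toReal :=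
    ENNReal.toReal_pos (Metric.measure_ball_pos _ _ one_pos).ne' measure_ball_lt_top.ne
  set ω := (volume (Metric.ball (0 : EuclideanSpace ℝ (Fin N)) 1)).toReal with hω
  refine ⟨ω * K₁, by positivity, ω * K₂, by positivity, fun y₀ r hy hr => ?_⟩
  obtain ⟨h1, h2⟩ := hK y₀ r hy hr
  have hrM : r * max (y₀ / r) 1 = max y₀ r := by
    rw [mul_max_of_nonneg _ _ hr.le, mul_div_cancel₀ _ hr.ne', mul_one]
  have hrew : r ^ ((N : ℝ) + 1 + c) * (max (y₀ / r) 1) ^ c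
      = r ^ N * (r * (max y₀ r) ^ c) := by
    have e1 : r ^ ((N : ℝ) + 1 + c) = r ^ (N:ℝ) * r ^ (1:ℝ) * r ^ c := by
      rw [← Real.rpow_add hr, ← Real.rpow_add hr]
    have e2 : r ^ c * (max (y₀ / r) 1) ^ c = (max y₀ r) ^ c := by
      rw [← Real.mul_rpow hr.le (le_max_of_le_right zero_le_one), hrM]
    calc r ^ ((N : ℝ) + 1 + c) * (max (y₀ / r) 1) ^ c
        = r ^ (N:ℝ) * (r ^ (1:ℝ) * (r ^ c * (max (y₀ / r) 1) ^ c)) := by rw [e1]; ring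
      _ = r ^ N * (r * (max y₀ r) ^ c) := by
          rw [e2, Real.rpow_natCast, Real.rpow_one]
  have hωrN : (0:ℝ) ≤ ω * r ^ N := by positivity
  have hV : V N c y₀ r = (ω * r ^ N) * ∫ y in Ioo (max (y₀ - r) 0) (y₀ + r), y ^ c := by
    simp only [V, ← hω]
  constructor
  · calc ω * K₁ * (r ^ ((N : ℝ) + 1 + c) * (max (y₀ / r) 1) ^ c)
        = (ω * r ^ N) * (K₁ * (r * (max y₀ r) ^ c)) := by rw [hrew]; ring
      _ ≤ (ω * r ^ N) * ∫ y in Ioo (max (y₀ - r) 0) (y₀ + r), y ^ c :=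
          mul_le_mul_of_nonneg_left h1 hωrN
      _ = V N c y₀ r := hV.symm
  · calc V N c y₀ r
        = (ω * r ^ N) * ∫ y in Ioo (max (y₀ - r) 0) (y₀ + r), y ^ c := hV
      _ ≤ (ω * r ^ N) * (K₂ * (r * (max y₀ r) ^ c)) :=
          mul_le_mul_of_nonneg_left h2 hωrN
      _ = ω * K₂ * (r ^ ((N : ℝ) + 1 + c) * (max (y₀ / r) 1) ^ c) := by rw [hrew]; ring
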